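/- Let G be a finite connected simple graph with n vertices and m edges such that m ≥ n, all of whose vertices have degree at least 1. Then the characteristic polynomial of U over ℂ factors as char(U)(X) = (X² − 1)^{m−n} · ∏_{μ} (X² − 2μX + 1), where the product runs over the multiset of roots μ (with multiplicity) of the characteristic polynomial of T(G) over ℂ. (Corollary 4.2, stated as a polynomial factorization.) -/

import Mathlib

open Matrix SimpleGraph Polynomial

set_option maxHeartbeats 1600000
set_option synthInstance.maxHeartbeats 400000

/-- The matrix `T(G)`: `T u v = 1 / deg u` if `(u,v)` is a dart of `G`, else `0`. -/
noncomputable def quantumT {V : Type*} [Fintype V] (G : SimpleGraph V)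
    [DecidableRel G.Adj] : Matrix V V ℂ :=
  fun u v => if G.Adj u v then (1 : ℂ) / (G.degree u : ℂ) else 0

/-- The transition matrix `U` of the discrete-time quantum walk on `G`, indexed by darts:
`U e f = 2 / deg (t f)` if `t f = o e` and `f ≠ e⁻¹`, `U e f = 2 / deg (t f) - 1` if
`f = e⁻¹`, and `0` otherwise. -/
noncomputable def quantumU {V : Type*} [Fintype V] (G : SimpleGraph V)
    [DecidableRel G.Adj] [DecidableEq V] : Matrix G.Dart G.Dart ℂ :=
  fun e f =>
    if f.toProd.2 = e.toProd.1 ∧ f ≠ e.symm then (2 : ℂ) / (G.degree f.toProd.2 : ℂ)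
    else if f = e.symm then (2 : ℂ) / (G.degree f.toProd.2 : ℂ) - 1
    else 0

namespace QW
variable {V : Type*} [Fintype V] [DecidableEq V] (G : SimpleGraph V) [DecidableRel G.Adj]

noncomputable def Sm : Matrix G.Dart G.Dart ℂ := fun e f => if f = e.symm then 1 else 0
noncomputable def Bm : Matrix G.Dart V ℂ := fun e v => if v = e.toProd.1 then 1 else 0
noncomputable def Cm : Matrix V G.Dart ℂ :=
  fun v f => if f.toProd.2 = v then 2 / (G.degree v : ℂ) else 0

lemma SS : Sm G * Sm G = 1 := by
  ext e f
  simp only [Sm, Matrix.mul_apply, Matrix.one_apply, ite_mul, one_mul, zero_mul]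
  rw [Finset.sum_ite_eq' Finset.univ e.symm (fun g => if f = g.symm then (1:ℂ) else 0)]
  simp [Dart.symm_symm, eq_comm]

lemma CB : Cm G * Bm G = (2:ℂ) • quantumT G := by
  classical
  ext u v
  simp only [Cm, Bm, Matrix.mul_apply, Matrix.smul_apply, quantumT, smul_eq_mul]
  have hterm : ∀ f : G.Dart,
      (if f.toProd.2 = u then 2 / (G.degree u : ℂ) else 0) * (if v = f.toProd.1 then 1 else 0)
      = if f.toProd = (v, u) then 2 / (G.degree u : ℂ) else 0 := by
    intro f
    by_cases h : f.toProd = (v, u)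
    · simp [h]
    · rw [if_neg h]
      by_cases h2 : f.toProd.2 = u
      · rw [if_pos h2, if_neg fun h1 => h (Prod.ext h1.symm h2), mul_zero]
      · rw [if_neg h2, zero_mul]
  rw [Finset.sum_congr rfl fun f _ => hterm f]
  by_cases hadj : G.Adj u v
  · have hadj' : G.Adj v u := hadj.symm
    rw [Finset.sum_eq_single (⟨(v,u), hadj'⟩ : G.Dart)]
    · simp [hadj]; ring
    · intro g _ hg
      rw [if_neg]
      intro hge; exact hg (Dart.ext _ _ hge)
    · simp
  · rw [Finset.sum_eq_zero, if_neg hadj, mul_zero]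
    intro g _
    rw [if_neg]
    intro hge
    have h1 : g.toProd.1 = v := by rw [hge]
    have h2 : g.toProd.2 = u := by rw [hge]
    exact hadj (show G.Adj v u by rw [← h1, ← h2]; exact g.adj).symm

lemma U_eq : quantumU G = Bm G * Cm G - Sm G := by
  ext e f
  simp only [quantumU, Matrix.sub_apply, Matrix.mul_apply, Sm, Bm, Cm, ite_mul, one_mul,
    zero_mul]
  rw [Finset.sum_ite_eq' Finset.univ e.toProd.1
    (fun v => if f.toProd.2 = v then 2 / (G.degree v : ℂ) else 0)]
  simp only [Finset.mem_univ, if_true]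
  by_cases h2 : f = e.symm
  · have h1 : f.toProd.2 = e.toProd.1 := by simp [h2]
    rw [if_neg (by simp [h2]), if_pos h2, if_pos h2, if_pos h1, h1]
  · by_cases h1 : f.toProd.2 = e.toProd.1
    · rw [if_pos ⟨h1, h2⟩, if_pos h1, if_neg h2, sub_zero, h1]
    · rw [if_neg (fun hc => h1 hc.1), if_neg h2, if_neg h1, if_neg h2, sub_zero]

lemma SB : Sm G * Bm G = fun e v => if v = e.toProd.2 then (1:ℂ) else 0 := by
  ext e v
  simp only [Sm, Bm, Matrix.mul_apply, ite_mul, one_mul, zero_mul]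
  rw [Finset.sum_ite_eq' Finset.univ e.symm (fun g => if v = g.toProd.1 then (1:ℂ) else 0)]
  simp [Dart.symm_toProd]

lemma card_snd_fiber (u : V) :
    (Finset.univ.filter fun d : G.Dart => d.toProd.2 = u).card = G.degree u := by
  rw [← G.dart_fst_fiber_card_eq_degree u]
  apply Finset.card_bij' (fun d _ => d.symm) (fun d _ => d.symm) <;>
    simp [Dart.symm_toProd, Finset.mem_filter]

lemma CSB (hdeg : ∀ v : V, 1 ≤ G.degree v) : Cm G * (Sm G * Bm G) = (2:ℂ) • 1 := by
  ext u v
  rw [Matrix.mul_apply, SB]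
  simp only [Cm, Matrix.mul_apply, Matrix.smul_apply, Matrix.one_apply, smul_eq_mul]
  by_cases huv : u = v
  · subst huv
    rw [if_pos rfl, mul_one]
    have : ∀ f : G.Dart,
        (if f.toProd.2 = u then 2 / (G.degree u : ℂ) else 0) *
          (if u = f.toProd.2 then (1:ℂ) else 0)
        = if f.toProd.2 = u then 2 / (G.degree u : ℂ) else 0 := by
      intro f; by_cases h : f.toProd.2 = u <;> simp [h, eq_comm]
    rw [Finset.sum_congr rfl fun f _ => this f, ← Finset.sum_filter,
      Finset.sum_const, card_snd_fiber, nsmul_eq_mul]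
    have hd : (G.degree u : ℂ) ≠ 0 := by
      exact_mod_cast Nat.pos_iff_ne_zero.mp (hdeg u)
    field_simp
  · rw [if_neg huv, mul_zero, Finset.sum_eq_zero]
    intro f _
    by_cases hv : v = f.toProd.2
    · rw [if_neg (show ¬ f.toProd.2 = u from fun h => huv ((hv.trans h).symm)), zero_mul]
    · rw [if_neg hv, mul_zero]

lemma charmatrix_prod :
    charmatrix (-(Sm G)) * charmatrix (Sm G) = (X^2 - 1 : ℂ[X]) • 1 := by
  have hdef : ∀ M : Matrix G.Dart G.Dart ℂ,
      charmatrix M = Matrix.scalar G.Dart (X : ℂ[X]) - (C : ℂ →+* ℂ[X]).mapMatrix M :=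
    fun M => rfl
  set s : Matrix G.Dart G.Dart ℂ[X] := Matrix.scalar G.Dart (X : ℂ[X]) with hs
  set A : Matrix G.Dart G.Dart ℂ[X] := (C : ℂ →+* ℂ[X]).mapMatrix (Sm G) with hA
  have hAA : A * A = 1 := by
    rw [hA, ← _root_.map_mul, SS, _root_.map_one]
  have hcomm : s * A = A * s :=
    (Matrix.scalar_commute (X : ℂ[X]) (fun r' => Commute.all _ _) A).eq
  have h1 : charmatrix (-(Sm G)) = s + A := by
    rw [hdef, map_neg, sub_neg_eq_add]
  have h2 : charmatrix (Sm G) = s - A := by rw [hdef]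
  rw [h1, h2]
  have : (s + A) * (s - A) = s * s - A * A := by
    rw [add_mul, mul_sub, mul_sub, hcomm]
    abel
  rw [this, hAA, hs, ← _root_.map_mul, ← pow_two]
  ext i j
  rcases eq_or_ne i j with rfl | h
  · simp [Matrix.scalar_apply, Matrix.smul_apply, Matrix.one_apply]
  · simp [Matrix.scalar_apply, Matrix.smul_apply, Matrix.one_apply_ne h,
      Matrix.diagonal_apply_ne _ h]

lemma charpoly_mul_self :
    (-(Sm G)).charpoly * (Sm G).charpoly = ((X^2 - 1 : ℂ[X]))^(Fintype.card G.Dart) := by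
  rw [Matrix.charpoly, Matrix.charpoly, ← det_mul, charmatrix_prod, det_smul, det_one, mul_one]

lemma charpoly_neg_eq : (-(Sm G)).charpoly = (Sm G).charpoly := by
  classical
  set ι := Fintype.equivFin V with hι
  set ε : G.Dart → ℂ := fun d => if ι d.toProd.1 < ι d.toProd.2 then 1 else -1 with hε
  have hε2 : ∀ d, ε d * ε d = 1 := by
    intro d; by_cases h : ι d.toProd.1 < ι d.toProd.2 <;> simp [hε, h]
  have hεs : ∀ d, ε d * ε d.symm = -1 := by
    intro d
    have hne : ι d.toProd.1 ≠ ι d.toProd.2 := fun h => d.fst_ne_snd (ι.injective h)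
    rcases lt_or_gt_of_ne hne with h | h
    · simp [hε, Dart.symm_toProd, h, asymm h]
    · simp [hε, Dart.symm_toProd, h, asymm h]
  set Dg : Matrix G.Dart G.Dart ℂ := Matrix.diagonal ε with hDg
  have hDg2 : Dg * Dg = 1 := by
    rw [hDg, Matrix.diagonal_mul_diagonal,
      show (fun i => ε i * ε i) = fun _ => (1:ℂ) from funext hε2, Matrix.diagonal_one]
  have hconj : Dg * (-(Sm G)) * Dg = Sm G := by
    ext e f
    rw [Matrix.mul_diagonal, Matrix.diagonal_mul]
    simp only [Matrix.neg_apply, Sm]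
    by_cases h : f = e.symm
    · rw [if_pos h, h]
      linear_combination -hεs e
    · rw [if_neg h]; ring
  set Dg' : Matrix G.Dart G.Dart ℂ[X] := (C : ℂ →+* ℂ[X]).mapMatrix Dg with hDg'
  have hDg'2 : Dg' * Dg' = 1 := by rw [hDg', ← _root_.map_mul, hDg2, _root_.map_one]
  have hchm : Dg' * charmatrix (-(Sm G)) * Dg' = charmatrix (Sm G) := by
    have hdef : ∀ M : Matrix G.Dart G.Dart ℂ,
        charmatrix M = Matrix.scalar G.Dart (X : ℂ[X]) - (C : ℂ →+* ℂ[X]).mapMatrix M :=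
      fun M => rfl
    rw [hdef, hdef]
    have hscomm : Dg' * Matrix.scalar G.Dart (X : ℂ[X]) = Matrix.scalar G.Dart (X : ℂ[X]) * Dg' :=
      ((Matrix.scalar_commute (X : ℂ[X]) (fun r' => Commute.all _ _) Dg').eq).symm
    rw [Matrix.mul_sub, Matrix.sub_mul, hscomm, Matrix.mul_assoc, hDg'2, Matrix.mul_one]
    congr 1
    rw [hDg', ← _root_.map_mul, ← _root_.map_mul, hconj]
  have := congrArg Matrix.det hchm
  rw [det_mul, det_mul] at this
  have hdet2 : Dg'.det * Dg'.det = 1 := by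
    rw [← det_mul, hDg'2, det_one]
  rw [Matrix.charpoly, Matrix.charpoly, ← this]
  linear_combination -(charmatrix (-(Sm G))).det * hdet2

lemma charpoly_negSm :
    (-(Sm G)).charpoly = ((X^2 - 1 : ℂ[X]))^(G.edgeFinset.card) := by
  set q : ℂ[X] := X^2 - 1 with hq
  have hqm : q.Monic := by
    have := Polynomial.monic_X_pow_sub_C (1:ℂ) (two_ne_zero)
    rwa [_root_.map_one] at this
  set p := (-(Sm G)).charpoly with hp
  have hsq : p * p = (q ^ G.edgeFinset.card) * (q ^ G.edgeFinset.card) := by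
    have h1 := charpoly_mul_self G
    rw [← charpoly_neg_eq G] at h1
    calc p * p = q ^ (2 * G.edgeFinset.card) := by
          rw [← G.dart_card_eq_twice_card_edges]; exact h1
      _ = _ := by rw [two_mul, pow_add]
  have : (p - q ^ G.edgeFinset.card) * (p + q ^ G.edgeFinset.card) = 0 := by
    linear_combination hsq
  rcases mul_eq_zero.mp this with h | h
  · linear_combination h
  · exfalso
    have hpm : p.Monic := (-(Sm G)).charpoly_monic
    have h' : p = -(q ^ G.edgeFinset.card) := by linear_combination h
    have := hpm.leadingCoeff
    rw [h', leadingCoeff_neg, (hqm.pow _).leadingCoeff] at this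
    norm_num at this

lemma charm_map_eval {ι : Type*} [Fintype ι] [DecidableEq ι] (M : Matrix ι ι ℂ) (z : ℂ) :
    (charmatrix M).map (eval z) = z • (1 : Matrix ι ι ℂ) - M := by
  ext i j
  rcases eq_or_ne i j with rfl | h
  · simp [charmatrix_apply_eq, Matrix.map_apply, Matrix.one_apply, Matrix.smul_apply,
      Matrix.sub_apply]
  · simp [charmatrix_apply_ne _ _ _ h, Matrix.map_apply, Matrix.one_apply_ne h,
      Matrix.smul_apply, Matrix.sub_apply]

lemma eval_det {ι : Type*} [Fintype ι] [DecidableEq ι] (M : Matrix ι ι ℂ[X]) (z : ℂ) :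
    eval z M.det = (M.map (eval z)).det := by
  rw [← coe_evalRingHom, RingHom.map_det, RingHom.mapMatrix_apply]

lemma main_eval (hdeg : ∀ v : V, 1 ≤ G.degree v) (z : ℂ) (hz0 : z ≠ 0)
    (hq0 : z^2 - 1 ≠ 0) :
    eval z ((quantumU G).charpoly) * (z^2-1)^(Fintype.card V)
      = (z^2-1)^(G.edgeFinset.card) *
        ((quantumT G).charpoly.roots.map (fun μ => z ^ 2 - 2 * μ * z + 1)).prod := by
  classical
  set n := Fintype.card V with hn
  set m := G.edgeFinset.card with hm
  set q : ℂ := z^2 - 1 with hqdef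
  set S : Matrix G.Dart G.Dart ℂ := Sm G with hS
  set B : Matrix G.Dart V ℂ := Bm G with hB
  set Cm' : Matrix V G.Dart ℂ := Cm G with hC
  set T : Matrix V V ℂ := quantumT G with hT
  have hSS : S * S = 1 := SS G
  have hCB : Cm' * B = (2:ℂ) • T := CB G
  have hCSB : Cm' * (S * B) = (2:ℂ) • 1 := CSB G hdeg
  -- eval of charpoly U
  have hevalU : eval z ((quantumU G).charpoly)
      = (z • (1 : Matrix G.Dart G.Dart ℂ) + S - B * Cm').det := by
    rw [Matrix.charpoly, eval_det, charm_map_eval, U_eq]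
    congr 1
    rw [hB, hC, hS]
    abel
  -- det (z•1 + S)
  have hdetS : (z • (1 : Matrix G.Dart G.Dart ℂ) + S).det = q ^ m := by
    have h1 : eval z ((-(Sm G)).charpoly) = (z • (1 : Matrix G.Dart G.Dart ℂ) + S).det := by
      rw [Matrix.charpoly, eval_det, charm_map_eval, sub_neg_eq_add, hS]
    rw [← h1, charpoly_negSm, eval_pow]
    have : eval z ((X:ℂ[X])^2 - 1) = q := by simp [hqdef]
    rw [this, hm]
  set W : Matrix G.Dart G.Dart ℂ := q⁻¹ • (z • 1 - S) with hW
  have hfact : (z • (1:Matrix G.Dart G.Dart ℂ) + S) * (z • 1 - S) = q • 1 := by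
    have g1 : (z • (1:Matrix G.Dart G.Dart ℂ)) * (z • 1) = (z*z) • 1 := by
      rw [Matrix.smul_mul, Matrix.mul_smul, smul_smul, Matrix.one_mul]
    have g2 : (z • (1:Matrix G.Dart G.Dart ℂ)) * S = z • S := by
      rw [Matrix.smul_mul, Matrix.one_mul]
    have g3 : S * (z • (1:Matrix G.Dart G.Dart ℂ)) = z • S := by
      rw [Matrix.mul_smul, Matrix.mul_one]
    have e1 : (z • (1:Matrix G.Dart G.Dart ℂ) + S) * (z • 1 - S) = (z*z) • 1 - S * S := by
      rw [add_mul, mul_sub, mul_sub, g1, g2, g3]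
      abel
    rw [e1, hSS, hqdef, sub_smul, one_smul, pow_two]
  have hWinv : (z • (1:Matrix G.Dart G.Dart ℂ) + S) * W = 1 := by
    rw [hW, Matrix.mul_smul, hfact, smul_smul, inv_mul_cancel₀ hq0, one_smul]
  have hsplit : z • (1:Matrix G.Dart G.Dart ℂ) + S - B * Cm'
      = (z • 1 + S) * (1 - W * (B * Cm')) := by
    rw [Matrix.mul_sub, Matrix.mul_one, ← Matrix.mul_assoc, hWinv, Matrix.one_mul]
  have hCWB : Cm' * (W * B) = q⁻¹ • ((2*z) • T - (2 : ℂ) • 1) := by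
    have e1 : W * B = q⁻¹ • (z • B - S * B) := by
      rw [hW, Matrix.smul_mul, Matrix.sub_mul, Matrix.smul_mul, Matrix.one_mul]
    rw [e1, Matrix.mul_smul, Matrix.mul_sub, Matrix.mul_smul, hCB, hCSB, smul_smul, mul_comm z 2]
  have h1sub : (1 : Matrix V V ℂ) - Cm' * (W * B)
      = q⁻¹ • ((z^2 + 1) • 1 - (2*z) • T) := by
    rw [hCWB]
    have e2 : (1 : Matrix V V ℂ) = q⁻¹ • (q • 1) := by
      rw [smul_smul, inv_mul_cancel₀ hq0, one_smul]
    nth_rewrite 1 [e2]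
    rw [← smul_sub]
    congr 1
    have hadd : q • (1:Matrix V V ℂ) + (2:ℂ) • 1 = (z^2+1) • 1 := by
      rw [← add_smul]; congr 1; rw [hqdef]; ring
    rw [sub_sub_eq_add_sub, ← hadd]
  -- vertex-side determinant
  set p : ℂ[X] := (quantumT G).charpoly with hp
  have hpm : p.Monic := (quantumT G).charpoly_monic
  have hsplits : p.Splits := IsAlgClosed.splits p
  have hroots : p = (p.roots.map fun a => X - C a).prod :=
    hsplits.eq_prod_roots_of_monic hpm
  have hcard : p.roots.card = n := by
    rw [splits_iff_card_roots.mp hsplits, hp, Matrix.charpoly_natDegree_eq_dim]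
  have hx0 : (2 * z : ℂ) ≠ 0 := mul_ne_zero two_ne_zero hz0
  set y : ℂ := (z^2 + 1) / (2*z) with hy
  have h2xy : (2*z) * y = z^2 + 1 := by
    rw [hy, mul_comm, div_mul_cancel₀ _ hx0]
  have hevt : (y • (1 : Matrix V V ℂ) - T).det = eval y p := by
    rw [hp, Matrix.charpoly, eval_det, charm_map_eval, hT]
  have hQ : ((z^2 + 1) • (1 : Matrix V V ℂ) - (2*z) • T).det
      = (p.roots.map (fun μ => z ^ 2 - 2 * μ * z + 1)).prod := by
    have e3 : (z^2 + 1) • (1 : Matrix V V ℂ) - (2*z) • T = (2*z) • (y • 1 - T) := by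
      rw [smul_sub, smul_smul, h2xy]
    rw [e3, det_smul, hevt]
    have e4 : eval y p = (p.roots.map (fun a => y - a)).prod := by
      conv_lhs => rw [hroots]
      rw [← coe_evalRingHom, map_multiset_prod, Multiset.map_map]
      congr 1
      apply Multiset.map_congr rfl
      intro a _
      simp
    rw [e4, ← hn, ← hcard, ← Multiset.prod_replicate, ← Multiset.map_const',
      ← Multiset.prod_map_mul]
    apply congrArg
    apply Multiset.map_congr rfl
    intro a _
    linear_combination h2xy
  -- assemble
  have hdetmain : eval z ((quantumU G).charpoly)
      = q ^ m * ((q⁻¹) ^ n * ((z^2 + 1) • (1 : Matrix V V ℂ) - (2*z) • T).det) := by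
    rw [hevalU, hsplit, det_mul, hdetS]
    congr 1
    rw [← Matrix.mul_assoc W, Matrix.det_one_sub_mul_comm, h1sub, det_smul, ← hn]
  have hqq : (q⁻¹) ^ n * q ^ n = 1 := by
    rw [← mul_pow, inv_mul_cancel₀ hq0, one_pow]
  rw [hdetmain, hQ]
  linear_combination (q ^ m * ((p.roots.map (fun μ => z ^ 2 - 2 * μ * z + 1)).prod)) * hqq

lemma main (hdeg : ∀ v : V, 1 ≤ G.degree v) :
    (quantumU G).charpoly * ((X:ℂ[X])^2 - 1)^(Fintype.card V)
      = ((X:ℂ[X])^2 - 1)^(G.edgeFinset.card) *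
        ((quantumT G).charpoly.roots.map (fun μ => (X:ℂ[X]) ^ 2 - C (2 * μ) * X + 1)).prod := by
  apply Polynomial.eq_of_infinite_eval_eq
  have hsub : (({0, 1, -1} : Set ℂ))ᶜ ⊆
      {x | eval x ((quantumU G).charpoly * ((X:ℂ[X])^2 - 1)^(Fintype.card V))
        = eval x (((X:ℂ[X])^2 - 1)^(G.edgeFinset.card) *
            ((quantumT G).charpoly.roots.map
              (fun μ => (X:ℂ[X]) ^ 2 - C (2 * μ) * X + 1)).prod)} := by
    intro z hz
    simp only [Set.mem_compl_iff, Set.mem_insert_iff, Set.mem_singleton_iff, not_or] at hz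
    obtain ⟨h0, h1, hm1⟩ := hz
    have hq0 : z^2 - 1 ≠ 0 := by
      intro h
      have hfac : (z - 1) * (z + 1) = 0 := by linear_combination h
      rcases mul_eq_zero.mp hfac with h' | h'
      · exact h1 (by linear_combination h')
      · exact hm1 (by linear_combination h')
    show eval z _ = eval z _
    rw [eval_mul, eval_mul, eval_pow, eval_pow]
    have hq : eval z ((X:ℂ[X])^2 - 1) = z^2 - 1 := by simp
    rw [hq]
    have hprod : eval z (((quantumT G).charpoly.roots.map
        (fun μ => (X:ℂ[X]) ^ 2 - C (2 * μ) * X + 1)).prod)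
        = ((quantumT G).charpoly.roots.map (fun μ => z ^ 2 - 2 * μ * z + 1)).prod := by
      rw [← coe_evalRingHom, map_multiset_prod, Multiset.map_map]
      apply congrArg
      apply Multiset.map_congr rfl
      intro a _
      simp
    rw [hprod]
    exact main_eval G hdeg z h0 hq0
  refine Set.Infinite.mono hsub ?_
  apply Set.Finite.infinite_compl
  exact (Set.finite_singleton _).insert _ |>.insert _

end QW

theorem stmt3 {V : Type*} [Fintype V] [DecidableEq V] (G : SimpleGraph V)
    [DecidableRel G.Adj] (hconn : G.Connected) (hdeg : ∀ v : V, 1 ≤ G.degree v)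
    (hmn : Fintype.card V ≤ G.edgeFinset.card) :
    (quantumU G).charpoly =
      (X ^ 2 - 1) ^ (G.edgeFinset.card - Fintype.card V) *
        ((quantumT G).charpoly.roots.map
          (fun μ => X ^ 2 - C (2 * μ) * X + 1)).prod := by
  classical
  have h := QW.main G hdeg
  have hqm : ((X:ℂ[X])^2 - 1).Monic := by
    have := Polynomial.monic_X_pow_sub_C (1:ℂ) (two_ne_zero)
    rwa [_root_.map_one] at this
  have hq0 : ((X:ℂ[X])^2 - 1) ≠ 0 := hqm.ne_zero
  have hpow : ((X:ℂ[X])^2-1)^(G.edgeFinset.card)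
      = ((X:ℂ[X])^2-1)^(G.edgeFinset.card - Fintype.card V)
        * ((X:ℂ[X])^2-1)^(Fintype.card V) := by
    rw [← pow_add, Nat.sub_add_cancel hmn]
  rw [hpow] at h
  refine mul_right_cancel₀ (pow_ne_zero (Fintype.card V) hq0) ?_
  linear_combination h
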